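/- Let A be a non-unital algebra, A_e its unitization, and |·| an algebra norm on A_e such that the restriction of |·| to A is a Q-norm on A (r_A(a) ≤ |a| for all a ∈ A) and A is closed in (A_e, |·|). Then |·| is a Q-norm on A_e: r_{A_e}(x) ≤ |x| for all x ∈ A_e. -/

import Mathlib

/-- A submultiplicative algebra norm on a (possibly non-unital) complex algebra. -/
structure AlgNorm (A : Type*) [NonUnitalRing A] [Module ℂ A]
    extends RingNorm A where
  smul' : ∀ (c : ℂ) (x : A), toFun (c • x) = ‖c‖ * toFun x

private lemma aux_pow_le {x y C : ℝ} (hx : 0 ≤ x) (hy : 0 ≤ y)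
    (h : ∀ n : ℕ, 0 < n → x ^ n ≤ C * y ^ n) : x ≤ y := by
  by_contra hxy
  push_neg at hxy
  rcases eq_or_lt_of_le hy with hy0 | hy0
  · have h1 := h 1 one_pos
    simp only [pow_one, ← hy0, mul_zero] at h1
    linarith
  · have hquot : 1 < x / y := (one_lt_div hy0).mpr hxy
    obtain ⟨n, hn⟩ := pow_unbounded_of_one_lt C hquot
    have hn' : C < (x / y) ^ (n + 1) :=
      lt_of_lt_of_le hn (pow_le_pow_right₀ hquot.le (Nat.le_succ n))
    have hle : (x / y) ^ (n + 1) ≤ C := by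
      rw [div_pow, div_le_iff₀ (pow_pos hy0 _)]
      exact h (n + 1) (Nat.succ_pos n)
    exact absurd (hle.trans_lt hn') (lt_irrefl _)

/-- If `|·|` is an algebra norm on the unitization `A_e` of a non-unital algebra `A`
whose restriction to `A` is a Q-norm, and `A` is closed in `(A_e, |·|)`, then `|·|` is
a Q-norm on all of `A_e`. -/
theorem QNorm_unitization_of_QNorm_closed
    (A : Type*) [NonUnitalRing A] [Module ℂ A]
    [IsScalarTower ℂ A A] [SMulCommClass ℂ A A]
    (hA : ¬ ∃ e : A, ∀ x : A, e * x = x ∧ x * e = x)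
    (p : AlgNorm (Unitization ℂ A))
    (hQA : ∀ a : A,
      (⨆ k ∈ quasispectrum ℂ a, (‖k‖₊ : ENNReal)) ≤
        ENNReal.ofReal (p.toRingNorm (a : Unitization ℂ A)))
    (hclosed : ∀ z : Unitization ℂ A,
      (∀ ε > (0 : ℝ), ∃ a : A, p.toRingNorm (z - (a : Unitization ℂ A)) < ε) →
      ∃ a : A, z = (a : Unitization ℂ A)) :
    ∀ z : Unitization ℂ A,
      (⨆ k ∈ spectrum ℂ z, (‖k‖₊ : ENNReal)) ≤ ENNReal.ofReal (p.toRingNorm z) := by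
  have psmul : ∀ (c : ℂ) (x : Unitization ℂ A),
      p.toRingNorm (c • x) = ‖c‖ * p.toRingNorm x := p.smul'
  -- Step 1: `A` is at positive distance from `1`, otherwise `A` would be unital.
  have hδ : ∃ δ > (0 : ℝ), ∀ a : A,
      δ ≤ p.toRingNorm ((a : Unitization ℂ A) + 1) := by
    by_contra h
    push_neg at h
    obtain ⟨e, he⟩ := hclosed 1 (fun ε hε => by
      obtain ⟨a, ha⟩ := h ε hε
      refine ⟨-a, ?_⟩
      rwa [Unitization.inr_neg, sub_neg_eq_add, add_comm])
    refine hA ⟨e, fun x => ?_⟩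
    constructor
    · apply Unitization.inr_injective (R := ℂ)
      rw [Unitization.inr_mul, ← he, one_mul]
    · apply Unitization.inr_injective (R := ℂ)
      rw [Unitization.inr_mul, ← he, mul_one]
  obtain ⟨δ, hδpos, hδ⟩ := hδ
  -- Step 2: continuity of the scalar part.
  have hfst : ∀ z : Unitization ℂ A, ‖z.fst‖ ≤ δ⁻¹ * p.toRingNorm z := by
    intro z
    rcases eq_or_ne z.fst 0 with h0 | h0
    · rw [h0, norm_zero]
      have := apply_nonneg p.toRingNorm z
      positivity
    · have key : z = z.fst • (((z.fst⁻¹ • z.snd : A) : Unitization ℂ A) + 1) := by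
        apply Unitization.ext
        · simp [Unitization.fst_smul, Unitization.fst_add]
        · simp [Unitization.snd_smul, Unitization.snd_add, smul_smul, mul_inv_cancel₀ h0]
      have h1 : δ * ‖z.fst‖ ≤ p.toRingNorm z := by
        conv_rhs => rw [key]
        rw [psmul]
        calc δ * ‖z.fst‖
            ≤ p.toRingNorm (((z.fst⁻¹ • z.snd : A) : Unitization ℂ A) + 1) * ‖z.fst‖ :=
              mul_le_mul_of_nonneg_right (hδ _) (norm_nonneg _)
          _ = _ := mul_comm _ _
      rw [← mul_le_mul_iff_of_pos_left hδpos, ← mul_assoc, mul_inv_cancel₀ hδpos.ne', one_mul]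
      exact h1
  -- Step 3: a uniform linear bound on the spectral radius.
  set C : ℝ := δ⁻¹ * (1 + p.toRingNorm 1) + 1 with hC
  have hp1 : (0 : ℝ) ≤ p.toRingNorm 1 := apply_nonneg _ _
  have hδinv : (0 : ℝ) ≤ δ⁻¹ := inv_nonneg.mpr hδpos.le
  have hCpos : (0 : ℝ) ≤ C := by positivity
  have key : ∀ z : Unitization ℂ A, ∀ k ∈ spectrum ℂ z, ‖k‖ ≤ C * p.toRingNorm z := by
    intro z k hk
    -- `k - z.fst` belongs to the spectrum of `↑z.snd`, i.e. the quasispectrum of `z.snd`.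
    have hmem : k - z.fst ∈ spectrum ℂ ((z.snd : Unitization ℂ A)) := by
      rw [spectrum.mem_iff] at hk ⊢
      convert hk using 2
      apply Unitization.ext <;>
        simp [Unitization.algebraMap_eq_inl, sub_eq_add_neg, Unitization.fst_add,
          Unitization.snd_add, Unitization.fst_neg, Unitization.snd_neg]
    have hq := hQA z.snd
    rw [Unitization.quasispectrum_eq_spectrum_inr ℂ] at hq
    have h1 : (‖k - z.fst‖₊ : ENNReal) ≤
        ENNReal.ofReal (p.toRingNorm ((z.snd : Unitization ℂ A))) :=
      le_trans (le_iSup₂ (f := fun k _ => ((‖k‖₊ : ENNReal))) (k - z.fst) hmem) hq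
    have h2 : ‖k - z.fst‖ ≤ p.toRingNorm ((z.snd : Unitization ℂ A)) := by
      rw [← ENNReal.ofReal_coe_nnreal, coe_nnnorm] at h1
      exact (ENNReal.ofReal_le_ofReal_iff (apply_nonneg _ _)).mp h1
    have hsnd : p.toRingNorm ((z.snd : Unitization ℂ A)) ≤
        p.toRingNorm z + ‖z.fst‖ * p.toRingNorm 1 := by
      have hz : ((z.snd : Unitization ℂ A)) = z - z.fst • 1 := by
        rw [← Algebra.algebraMap_eq_smul_one, Unitization.algebraMap_eq_inl]
        exact eq_sub_of_add_eq (by rw [add_comm]; exact Unitization.inl_fst_add_inr_snd_eq z)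
      rw [hz]
      calc p.toRingNorm (z - z.fst • 1) ≤ p.toRingNorm z + p.toRingNorm (z.fst • 1) :=
            map_sub_le_add _ _ _
        _ = p.toRingNorm z + ‖z.fst‖ * p.toRingNorm 1 := by rw [psmul]
    have hk1 : ‖k‖ ≤ ‖k - z.fst‖ + ‖z.fst‖ := by
      simpa using norm_add_le (k - z.fst) z.fst
    have hfz := hfst z
    have hpz : (0 : ℝ) ≤ p.toRingNorm z := apply_nonneg _ _
    have hmul : ‖z.fst‖ * p.toRingNorm 1 ≤ (δ⁻¹ * p.toRingNorm z) * p.toRingNorm 1 :=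
      mul_le_mul_of_nonneg_right hfz hp1
    rw [hC]
    nlinarith
  -- Step 4: iterate on powers to remove the constant `C`.
  intro z
  refine iSup₂_le fun k hk => ?_
  rw [← ENNReal.ofReal_coe_nnreal, coe_nnnorm]
  refine ENNReal.ofReal_le_ofReal ?_
  refine aux_pow_le (C := C) (norm_nonneg k) (apply_nonneg _ _) fun n hn => ?_
  have hpow : k ^ n ∈ spectrum ℂ (z ^ n) := by
    have := spectrum.subset_polynomial_aeval z (Polynomial.X ^ n : Polynomial ℂ)
      ⟨k, hk, rfl⟩
    simpa using this
  calc ‖k‖ ^ n = ‖k ^ n‖ := (norm_pow k n).symm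
    _ ≤ C * p.toRingNorm (z ^ n) := key _ _ hpow
    _ ≤ C * (p.toRingNorm z) ^ n :=
        mul_le_mul_of_nonneg_left (map_pow_le_pow _ z hn.ne') hCpos
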